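/- Let E be a vector lattice with e ∈ E⁺ such that f^[2] := sup_{λ∈ℝ}(2λf − λ²e) exists for all f ∈ E. Then for every f ∈ E one has f^[2] = |f|^[2]. -/
import Mathlib

private lemma smul_sup_le' {E : Type*} [Lattice E] [AddCommGroup E]
    [Module ℝ E] [CovariantClass E E (· + ·) (· ≤ ·)] [PosSMulMono ℝ E]
    {c : ℝ} (hc : 0 ≤ c) (a b : E) : c • (a ⊔ b) ≤ c • a ⊔ c • b := by
  rcases eq_or_lt_of_le hc with h | h
  · simp [← h]
  · have h1 : a ⊔ b ≤ c⁻¹ • (c • a ⊔ c • b) := by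
      apply sup_le
      · calc a = c⁻¹ • (c • a) := by rw [smul_smul, inv_mul_cancel₀ h.ne', one_smul]
          _ ≤ c⁻¹ • (c • a ⊔ c • b) :=
            smul_le_smul_of_nonneg_left le_sup_left (inv_nonneg.2 hc)
      · calc b = c⁻¹ • (c • b) := by rw [smul_smul, inv_mul_cancel₀ h.ne', one_smul]
          _ ≤ c⁻¹ • (c • a ⊔ c • b) :=
            smul_le_smul_of_nonneg_left le_sup_right (inv_nonneg.2 hc)
    calc c • (a ⊔ b) ≤ c • (c⁻¹ • (c • a ⊔ c • b)) :=
          smul_le_smul_of_nonneg_left h1 hc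
      _ = c • a ⊔ c • b := by rw [smul_smul, mul_inv_cancel₀ h.ne', one_smul]

/-- In a square closed positively pointed vector lattice, `f^[2] = |f|^[2]`. -/
theorem square_abs {E : Type*} [Lattice E] [AddCommGroup E]
    [Module ℝ E] [CovariantClass E E (· + ·) (· ≤ ·)] [PosSMulMono ℝ E]
    (e : E) (he : 0 ≤ e) (sq : E → E)
    (hsq : ∀ f : E, IsLUB (Set.range fun l : ℝ => (2 * l) • f - (l ^ 2) • e) (sq f))
    (f : E) :
    sq f = sq |f| := by
  apply le_antisymm
  · -- sq |f| is an upper bound of the set for f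
    apply (hsq f).2
    rintro x ⟨l, rfl⟩
    have key : (2 * l) • f ≤ (2 * |l|) • |f| := by
      rcases le_or_gt 0 l with hl | hl
      · rw [abs_of_nonneg hl]
        exact smul_le_smul_of_nonneg_left (le_abs_self f)
          (by positivity)
      · rw [abs_of_neg hl]
        have : (2 * l) • f = (2 * -l) • (-f) := by
          rw [smul_neg, ← neg_smul]; ring_nf
        rw [this]
        exact smul_le_smul_of_nonneg_left (neg_le_abs f) (by nlinarith)
    have hle : (2 * l) • f - l ^ 2 • e ≤ (2 * |l|) • |f| - |l| ^ 2 • e := by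
      rw [sq_abs]
      exact sub_le_sub_right key _
    exact hle.trans ((hsq |f|).1 ⟨|l|, rfl⟩)
  · -- sq f is an upper bound of the set for |f|
    apply (hsq |f|).2
    rintro x ⟨l, rfl⟩
    have h1 : (2 * l) • |f| ≤ (2 * |l|) • |f| := by
      have : (0:ℝ) ≤ 2 * |l| - 2 * l := by
        have := le_abs_self l; linarith
      exact sub_nonneg.1 (by rw [← sub_smul]; exact smul_nonneg this (abs_nonneg f))
    have h3 : (2 * |l|) • |f| ≤ (2 * |l|) • f ⊔ (2 * |l|) • (-f) := by
      have habs : |f| = f ⊔ (-f) := rfl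
      calc (2 * |l|) • |f| = (2 * |l|) • (f ⊔ -f) := by rw [← habs]
        _ ≤ (2 * |l|) • f ⊔ (2 * |l|) • (-f) :=
          smul_sup_le' (by positivity) _ _
    have h4 : (2 * l) • |f| - l ^ 2 • e ≤
        ((2 * |l|) • f - |l| ^ 2 • e) ⊔ ((2 * (-|l|)) • f - (-|l|) ^ 2 • e) := by
      have e1 : (2 * (-|l|)) • f = (2 * |l|) • (-f) := by
        rw [smul_neg, ← neg_smul]; ring_nf
      have e2 : (-|l|) ^ 2 = |l| ^ 2 := by ring
      rw [e1, e2, ← sup_sub]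
      calc (2 * l) • |f| - l ^ 2 • e ≤ (2 * |l|) • |f| - l ^ 2 • e :=
            sub_le_sub_right h1 _
        _ = (2 * |l|) • |f| - |l| ^ 2 • e := by rw [sq_abs]
        _ ≤ ((2 * |l|) • f ⊔ (2 * |l|) • (-f)) - |l| ^ 2 • e :=
            sub_le_sub_right h3 _
    exact h4.trans (sup_le ((hsq f).1 ⟨|l|, rfl⟩) ((hsq f).1 ⟨-|l|, rfl⟩))
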